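/- Let K be a complete discretely valued field of residue characteristic 3 with uniformizer π_K, and let L = K(π_L) where π_L is a root of the Eisenstein polynomial f(X) = X^6 - π_K X^5 + π_K X^4 + π_K. Then L/K is totally ramified of degree 6 with indices of inseparability i_0 = 4 and i_1 = 0. -/

import Mathlib

open Polynomial Classical

/-- A rank-one valuation `v` on `L`, written additively with values in `ℚ` and
junk value at `0`, which restricts to a normalized (`ℤ`-valued, surjective onto
`ℤ`) complete discrete valuation on the subfield `K`, and whose values on `L`
lie in `(1/n)ℤ`. -/
structure ExtValuation (K L : Type) [Field K] [Field L] [Algebra K L]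
    (v : L → ℚ) (n : ℕ) : Prop where
  map_mul : ∀ x y : L, x ≠ 0 → y ≠ 0 → v (x * y) = v x + v y
  map_add : ∀ x y : L, x ≠ 0 → y ≠ 0 → x + y ≠ 0 → min (v x) (v y) ≤ v (x + y)
  int_on_base : ∀ x : K, x ≠ 0 → ∃ m : ℤ, v (algebraMap K L x) = m
  exists_uniformizer : ∃ x : K, x ≠ 0 ∧ v (algebraMap K L x) = 1
  denom : ∀ x : L, x ≠ 0 → ∃ m : ℤ, v x = (m : ℚ) / n
  complete : ∀ a : ℕ → K,
    (∀ N : ℚ, ∃ M : ℕ, ∀ i ≥ M, ∀ j ≥ M,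
      a i = a j ∨ N ≤ v (algebraMap K L (a i - a j))) →
    ∃ l : K, ∀ N : ℚ, ∃ M : ℕ, ∀ i ≥ M,
      a i = l ∨ N ≤ v (algebraMap K L (a i - l))

/-- The residue field of `K` has characteristic `p`: `p` lies in the maximal
ideal of the valuation ring of `K`. -/
def ResidueCharP (K L : Type) [Field K] [Field L] [Algebra K L]
    (v : L → ℚ) (p : ℕ) : Prop :=
  (p : K) = 0 ∨ 0 < v (algebraMap K L (p : K))

/-- The residue field of `K` is perfect: every unit of the valuation ring is a
`p`-th power modulo the maximal ideal. -/
def PerfectResidue (K L : Type) [Field K] [Field L] [Algebra K L]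
    (v : L → ℚ) (p : ℕ) : Prop :=
  ∀ x : K, x ≠ 0 → v (algebraMap K L x) = 0 →
    ∃ y : K, x = y ^ p ∨ (x - y ^ p ≠ 0 ∧ 0 < v (algebraMap K L (x - y ^ p)))

/-- `ω` is a nonzero Teichmüller representative of `K`: a unit of the valuation
ring admitting `p^m`-th roots for every `m`. -/
def IsTeichmuller (K L : Type) [Field K] [Field L] [Algebra K L]
    (v : L → ℚ) (p : ℕ) (ω : K) : Prop :=
  ω ≠ 0 ∧ v (algebraMap K L ω) = 0 ∧ ∀ m : ℕ, ∃ y : K, y ^ p ^ m = ω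

/-- `ĩ_j = min{n·v(c_h) − h : 1 ≤ h ≤ n, v_p(h) ≤ j}`, computed in `ℕ∞` from
the function `w h = n·(valuation of c_h)` data `w h = v(c_h)`. -/
noncomputable def itildeIdx (p n : ℕ) (w : ℕ → ℕ∞) (j : ℕ) : ℕ∞ :=
  ⨅ h : {h : ℕ // 1 ≤ h ∧ h ≤ n ∧ padicValNat p h ≤ j},
    ((n : ℕ∞) * w h.1 - (h.1 : ℕ∞))

/-- `i_j = min{ĩ_{j'} + (j' − j) n e_K : j ≤ j' ≤ k}`. -/
noncomputable def insepIdx (p n k : ℕ) (eK : ℕ∞) (w : ℕ → ℕ∞) (j : ℕ) : ℕ∞ :=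
  ⨅ j' : {j' : ℕ // j ≤ j' ∧ j' ≤ k},
    itildeIdx p n w j'.1 + ((j'.1 : ℕ∞) - (j : ℕ∞)) * (n : ℕ∞) * eK

/-- The valuation (in `ℕ∞`, with `⊤` for the zero coefficient) of the
coefficient `c_h` of the minimal polynomial
`X^n − c_1 X^{n-1} + ⋯ + (−1)^n c_n` of `πL`, so that
`(−1)^h c_h = coeff (n−h)`. -/
noncomputable def coeffVal (K L : Type) [Field K] [Field L] [Algebra K L]
    (v : L → ℚ) (n : ℕ) (πL : L) (h : ℕ) : ℕ∞ :=
  if (minpoly K πL).coeff (n - h) = 0 then ⊤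
  else ((v (algebraMap K L ((minpoly K πL).coeff (n - h)))).num).toNat

/-- `e_K = v_K(p)`, with `e_K = ∞` when `char K = p`. -/
noncomputable def eAbs (K L : Type) [Field K] [Field L] [Algebra K L]
    (v : L → ℚ) (p : ℕ) : ℕ∞ :=
  if (p : K) = 0 then ⊤ else ((v (algebraMap K L (p : K))).num).toNat

/-- `L/K` has indices of inseparability `i 0, …, i k`: the indices computed
from the minimal polynomial of a uniformizer of `L` are given by `i`. -/
def HasInsepIndices (K L : Type) [Field K] [Field L] [Algebra K L]
    (v : L → ℚ) (p n k : ℕ) (i : ℕ → ℕ∞) : Prop :=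
  ∃ πL : L, v πL = 1 / (n : ℚ) ∧ Algebra.adjoin K {πL} = ⊤ ∧
    ∀ j ≤ k, insepIdx p n k (eAbs K L v p) (coeffVal K L v n πL) j = i j

section AuxLemmas

variable {K L : Type} [Field K] [Field L] [Algebra K L] {v : L → ℚ} {n : ℕ}

theorem ExtValuation.v_one (hv : ExtValuation K L v n) : v (1 : L) = 0 := by
  have h := hv.map_mul 1 1 one_ne_zero one_ne_zero
  rw [mul_one] at h; linarith

theorem ExtValuation.v_neg (hv : ExtValuation K L v n) {x : L} (hx : x ≠ 0) :
    v (-x) = v x := by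
  have h1 : v ((-1 : L) * (-1)) = v (-1 : L) + v (-1 : L) :=
    hv.map_mul _ _ (by norm_num) (by norm_num)
  rw [neg_mul_neg, one_mul, hv.v_one] at h1
  have h2 := hv.map_mul (-1) x (by norm_num) hx
  rw [neg_one_mul] at h2
  rw [h2]; linarith

theorem ExtValuation.ne_zero_of_v_ne (hv : ExtValuation K L v n) {x y : L} (hx : x ≠ 0)
    (hne : v x ≠ v y) : x + y ≠ 0 := by
  intro h
  have hyx : y = -x := by linear_combination h
  rw [hyx, hv.v_neg hx] at hne
  exact hne rfl

theorem ExtValuation.v_add_eq (hv : ExtValuation K L v n) {x y : L} (hx : x ≠ 0) (hy : y ≠ 0)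
    (hlt : v x < v y) : v (x + y) = v x := by
  have hxy : x + y ≠ 0 := hv.ne_zero_of_v_ne hx hlt.ne
  have h1 : min (v x) (v y) ≤ v (x + y) := hv.map_add x y hx hy hxy
  have h2 : min (v (x + y)) (v (-y)) ≤ v ((x + y) + -y) :=
    hv.map_add _ _ hxy (neg_ne_zero.mpr hy) (by simpa using hx)
  rw [add_neg_cancel_right, hv.v_neg hy] at h2
  rw [min_eq_left hlt.le] at h1
  rcases min_le_iff.mp h2 with h | h
  · exact le_antisymm h h1
  · linarith

theorem ExtValuation.v_pow (hv : ExtValuation K L v n) {x : L} (hx : x ≠ 0) (m : ℕ) :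
    v (x ^ m) = m * v x := by
  induction m with
  | zero => simp [hv.v_one]
  | succ k ih =>
    rw [pow_succ, hv.map_mul _ _ (pow_ne_zero _ hx) hx, ih]
    push_cast; ring

end AuxLemmas

/-- a root of `X^6 − π_K X^5 + π_K X^4 + π_K` over a complete
discretely valued field of residue characteristic 3 generates a totally
ramified extension of degree 6 with indices of inseparability `i₀ = 4` and
`i₁ = 0` (here `n = 6 = 2·3`, `k = 1`). -/
theorem stmt17 (K L : Type) [Field K] [Field L] [Algebra K L]
    (v : L → ℚ) (hv : ExtValuation K L v (Module.finrank K L))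
    (hres : ResidueCharP K L v 3)
    (πK : K) (hπK : πK ≠ 0 ∧ v (algebraMap K L πK) = 1)
    (f : Polynomial K)
    (hf : f = X ^ 6 - C πK * X ^ 5 + C πK * X ^ 4 + C πK)
    (πL : L) (hroot : Polynomial.aeval πL f = 0)
    (hgen : Algebra.adjoin K {πL} = ⊤) :
    Module.finrank K L = 6 ∧ v πL = 1 / 6 ∧
    insepIdx 3 6 1 (eAbs K L v 3) (coeffVal K L v 6 πL) 0 = 4 ∧
    insepIdx 3 6 1 (eAbs K L v 3) (coeffVal K L v 6 πL) 1 = 0 := by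
  obtain ⟨hπK0, hπKv⟩ := hπK
  have hm : f.Monic := by
    rw [hf]; monicity!
  have hfdeg : f.natDegree = 6 := by
    rw [hf]; compute_degree!
  have hfne : f ≠ 0 := hm.ne_zero
  have hint : IsIntegral K πL := ⟨f, hm, by rw [← aeval_def]; exact hroot⟩
  have hinj : Function.Injective (algebraMap K L) := (algebraMap K L).injective
  have haπ_ne : algebraMap K L πK ≠ 0 := by
    intro h; exact hπK0 (hinj (by simpa using h))
  set aπ : L := algebraMap K L πK with haπ
  have hπL0 : πL ≠ 0 := by
    intro h
    rw [h, hf] at hroot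
    simp only [map_add, map_sub, map_mul, map_pow, aeval_X, aeval_C] at hroot
    rw [show (0:L)^6 - aπ * 0^5 + aπ * 0^4 + aπ = aπ by ring] at hroot
    exact haπ_ne hroot
  rw [hf] at hroot
  simp only [map_add, map_sub, map_mul, map_pow, aeval_X, aeval_C] at hroot
  set t : ℚ := v πL with htdef
  set A : L := aπ * πL ^ 5 with hAdef
  set B : L := -(aπ * πL ^ 4) with hBdef
  set C3 : L := -aπ with hCdef
  have hsum : πL ^ 6 = A + B + C3 := by
    rw [hAdef, hBdef, hCdef]; linear_combination hroot
  have hA0 : A ≠ 0 := mul_ne_zero haπ_ne (pow_ne_zero _ hπL0)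
  have hB0 : B ≠ 0 := neg_ne_zero.mpr (mul_ne_zero haπ_ne (pow_ne_zero _ hπL0))
  have hC0 : C3 ≠ 0 := neg_ne_zero.mpr haπ_ne
  have hvA : v A = 1 + 5 * t := by
    rw [hAdef, hv.map_mul _ _ haπ_ne (pow_ne_zero _ hπL0), hπKv, hv.v_pow hπL0 5]
    push_cast; ring
  have hvB : v B = 1 + 4 * t := by
    rw [hBdef, hv.v_neg (mul_ne_zero haπ_ne (pow_ne_zero _ hπL0)),
      hv.map_mul _ _ haπ_ne (pow_ne_zero _ hπL0), hπKv, hv.v_pow hπL0 4]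
    push_cast; ring
  have hvC : v C3 = 1 := by rw [hCdef, hv.v_neg haπ_ne, hπKv]
  have h6t : v (πL ^ 6) = 6 * t := by
    rw [hv.v_pow hπL0 6]; push_cast; ring
  have ht : t = 1 / 6 := by
    rcases lt_trichotomy t 0 with h | h | h
    · have h1 : v (A + B) = 1 + 5 * t := by
        rw [← hvA]; exact hv.v_add_eq hA0 hB0 (by rw [hvA, hvB]; linarith)
      have hAB0 : A + B ≠ 0 := hv.ne_zero_of_v_ne hA0 (by rw [hvA, hvB]; intro hh; linarith)
      have h2 : v (A + B + C3) = 1 + 5 * t := by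
        rw [← h1]; exact hv.v_add_eq hAB0 hC0 (by rw [h1, hvC]; linarith)
      rw [hsum, h2] at h6t; linarith
    · by_cases hAB : A + B = 0
      · have hpc : πL ^ 6 = C3 := by rw [hsum, hAB, zero_add]
        rw [hpc, hvC] at h6t; linarith
      · have h1 := hv.map_add A B hA0 hB0 hAB
        rw [hvA, hvB, h] at h1
        norm_num at h1
        have hS0 : A + B + C3 ≠ 0 := by rw [← hsum]; exact pow_ne_zero _ hπL0
        have h2 := hv.map_add (A + B) C3 hAB hC0 hS0
        rw [hvC] at h2
        have h3 : (1 : ℚ) ≤ v (A + B + C3) := le_trans (le_min h1 le_rfl) h2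
        rw [← hsum, h6t, h] at h3; linarith
    · have hne : v B ≠ v A := by rw [hvA, hvB]; intro hh; linarith
      have h1 : v (B + A) = 1 + 4 * t := by
        rw [← hvB]; exact hv.v_add_eq hB0 hA0 (by rw [hvA, hvB]; linarith)
      have hBA0 : B + A ≠ 0 := hv.ne_zero_of_v_ne hB0 hne
      have h2 : v (C3 + (B + A)) = 1 := by
        rw [← hvC]; exact hv.v_add_eq hC0 hBA0 (by rw [h1, hvC]; linarith)
      have h3 : v (πL ^ 6) = 1 := by
        rw [hsum, show A + B + C3 = C3 + (B + A) by ring, h2]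
      rw [h6t] at h3; linarith
  -- degree computation
  have hIF : IntermediateField.adjoin K {πL} = ⊤ := by
    apply IntermediateField.toSubalgebra_injective
    rw [IntermediateField.adjoin_simple_toSubalgebra_of_isAlgebraic hint.isAlgebraic, hgen,
      IntermediateField.top_toSubalgebra]
  have hfr : Module.finrank K L = (minpoly K πL).natDegree := by
    have h1 := IntermediateField.adjoin.finrank hint
    rwa [hIF, IntermediateField.finrank_top'] at h1
  have hdvd : minpoly K πL ∣ f := minpoly.dvd K πL (by rw [hf]; simpa [hf] using hroot)
  have hdeg_le : (minpoly K πL).natDegree ≤ 6 := by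
    rw [← hfdeg]; exact Polynomial.natDegree_le_of_dvd hdvd hfne
  have hdeg_pos : 0 < (minpoly K πL).natDegree := minpoly.natDegree_pos hint
  obtain ⟨m, hmq⟩ := hv.denom πL hπL0
  have hn6 : Module.finrank K L = 6 := by
    rw [← htdef, ht] at hmq
    have hnpos : 0 < Module.finrank K L := by rw [hfr]; exact hdeg_pos
    have hkey : (m : ℚ) * 6 = (Module.finrank K L : ℚ) := by
      rw [div_eq_div_iff (by norm_num) (Nat.cast_ne_zero.mpr hnpos.ne')] at hmq
      linarith
    have hkey' : m * 6 = (Module.finrank K L : ℤ) := by exact_mod_cast hkey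
    have hle : Module.finrank K L ≤ 6 := by rw [hfr]; exact hdeg_le
    omega
  have hmin : minpoly K πL = f :=
    (Polynomial.eq_of_monic_of_dvd_of_natDegree_le (minpoly.monic hint) hm hdvd
      (by rw [hfdeg, ← hfr, hn6])).symm
  -- coefficients of f
  have hc5 : f.coeff 5 = -πK := by rw [hf]; simp [coeff_X_pow, coeff_C]
  have hc4 : f.coeff 4 = πK := by rw [hf]; simp [coeff_X_pow, coeff_C]
  have hc3 : f.coeff 3 = 0 := by rw [hf]; simp [coeff_X_pow, coeff_C]
  have hc2 : f.coeff 2 = 0 := by rw [hf]; simp [coeff_X_pow, coeff_C]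
  have hc1 : f.coeff 1 = 0 := by rw [hf]; simp [coeff_X_pow, coeff_C]
  have hc0 : f.coeff 0 = πK := by rw [hf]; simp [coeff_X_pow, coeff_C]
  have hw1 : coeffVal K L v 6 πL 1 = 1 := by
    simp only [coeffVal, hmin, show 6 - 1 = 5 from rfl, hc5,
      if_neg (neg_ne_zero.mpr hπK0), map_neg]
    rw [hv.v_neg haπ_ne, hπKv]
    norm_num
  have hw2 : coeffVal K L v 6 πL 2 = 1 := by
    simp only [coeffVal, hmin, show 6 - 2 = 4 from rfl, hc4, if_neg hπK0]
    rw [hπKv]; norm_num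
  have hw3 : coeffVal K L v 6 πL 3 = ⊤ := by
    simp only [coeffVal, hmin, show 6 - 3 = 3 from rfl, hc3, if_pos rfl, if_true]
  have hw4 : coeffVal K L v 6 πL 4 = ⊤ := by
    simp only [coeffVal, hmin, show 6 - 4 = 2 from rfl, hc2, if_pos rfl, if_true]
  have hw5 : coeffVal K L v 6 πL 5 = ⊤ := by
    simp only [coeffVal, hmin, show 6 - 5 = 1 from rfl, hc1, if_pos rfl, if_true]
  have hw6 : coeffVal K L v 6 πL 6 = 1 := by
    simp only [coeffVal, hmin, show 6 - 6 = 0 from rfl, hc0, if_neg hπK0]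
    rw [hπKv]; norm_num
  haveI : Fact (Nat.Prime 3) := ⟨by norm_num⟩
  have hp3 : ¬ padicValNat 3 3 ≤ 0 := by
    have := one_le_padicValNat_of_dvd (p := 3) (n := 3) (by norm_num) ⟨1, rfl⟩
    omega
  have hp6 : ¬ padicValNat 3 6 ≤ 0 := by
    have := one_le_padicValNat_of_dvd (p := 3) (n := 6) (by norm_num) ⟨2, rfl⟩
    omega
  have hp66 : padicValNat 3 6 ≤ 1 := by
    have h1 : padicValNat 3 (3 * 2) = padicValNat 3 3 + padicValNat 3 2 :=
      padicValNat.mul (by norm_num) (by norm_num)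
    rw [padicValNat.self (by norm_num),
      padicValNat.eq_zero_of_not_dvd (p := 3) (n := 2) (by norm_num),
      show (3 * 2 : ℕ) = 6 from rfl] at h1
    omega
  have hi0 : itildeIdx 3 6 (coeffVal K L v 6 πL) 0 = 4 := by
    unfold itildeIdx
    apply le_antisymm
    · refine iInf_le_of_le
        ⟨2, by norm_num, by norm_num,
          by rw [padicValNat.eq_zero_of_not_dvd (p := 3) (n := 2) (by norm_num)]⟩ ?_
      simp only [hw2]
      decide
    · refine le_iInf ?_
      rintro ⟨h, h1, h6, hp⟩
      interval_cases h
      · simp only [hw1]; decide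
      · simp only [hw2]; decide
      · exact absurd hp hp3
      · simp only [hw4]; decide
      · simp only [hw5]; decide
      · exact absurd hp hp6
  have hi1 : itildeIdx 3 6 (coeffVal K L v 6 πL) 1 = 0 := by
    unfold itildeIdx
    apply le_antisymm
    · refine iInf_le_of_le ⟨6, by norm_num, le_refl 6, hp66⟩ ?_
      simp only [hw6]
      decide
    · exact zero_le'
  have heK : 1 ≤ eAbs K L v 3 := by
    unfold eAbs
    split_ifs with h3
    · exact le_top
    · rcases hres with h | h
      · exact absurd h h3
      · obtain ⟨mm, hmm⟩ := hv.int_on_base _ h3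
        rw [hmm] at h
        rw [hmm, Rat.num_intCast]
        have h1 : 1 ≤ mm := by exact_mod_cast h
        have h2 : 1 ≤ mm.toNat := by omega
        exact_mod_cast h2
  have h4eK : (4 : ℕ∞) ≤ 6 * eAbs K L v 3 :=
    le_trans (by decide) (mul_le_mul_right heK 6)
  have hins0 : insepIdx 3 6 1 (eAbs K L v 3) (coeffVal K L v 6 πL) 0 = 4 := by
    unfold insepIdx
    apply le_antisymm
    · refine iInf_le_of_le ⟨0, le_refl 0, by norm_num⟩ ?_
      simp only [hi0]
      simp
    · refine le_iInf ?_
      rintro ⟨j, hj0, hj1⟩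
      interval_cases j
      · simp only [hi0]; simp
      · simp only [hi1, zero_add]
        calc (4 : ℕ∞) ≤ 6 * eAbs K L v 3 := h4eK
          _ = (((1:ℕ):ℕ∞) - ((0:ℕ):ℕ∞)) * 6 * eAbs K L v 3 := by
              rw [show (((1:ℕ):ℕ∞) - ((0:ℕ):ℕ∞)) = 1 by decide, one_mul]
  have hins1 : insepIdx 3 6 1 (eAbs K L v 3) (coeffVal K L v 6 πL) 1 = 0 := by
    unfold insepIdx
    apply le_antisymm
    · refine iInf_le_of_le ⟨1, le_refl 1, le_refl 1⟩ ?_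
      simp only [hi1, zero_add]
      simp
    · exact zero_le'
  exact ⟨hn6, ht, hins0, hins1⟩
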